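/- The function α(n) = (n-1) / (n/(1 - 1/n)^{n-1} − 1) is strictly monotone increasing for real n ≥ 2, with α(2) = 1/3 and limit 1/e as n → ∞. -/

import Mathlib

open Real Set Filter

noncomputable def alphaFun (n : ℝ) : ℝ :=
  (n - 1) / (n / (1 - 1 / n) ^ (n - 1) - 1)

noncomputable def Bfun (n : ℝ) : ℝ := (n / (n - 1)) ^ n - 1 / (n - 1)

-- log t < (t - t⁻¹)/2 for t > 1
lemma log_lt_half {t : ℝ} (ht : 1 < t) : Real.log t < (t - t⁻¹) / 2 := by
  have h0 : 0 < t := by linarith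
  rw [← Real.sinh_log h0]
  exact Real.self_lt_sinh_iff.2 (Real.log_pos ht)

-- chord inequality: u * log 2 ≤ log (1+u) for u ∈ [0,1]
lemma log_chord {u : ℝ} (h0 : 0 ≤ u) (h1 : u ≤ 1) : u * Real.log 2 ≤ Real.log (1 + u) := by
  have hc := strictConcaveOn_log_Ioi.concaveOn.2 (Set.mem_Ioi.2 one_pos)
    (Set.mem_Ioi.2 two_pos) (by linarith : (0:ℝ) ≤ 1 - u) h0 (by ring)
  simp only [smul_eq_mul, Real.log_one, mul_zero, mul_one, zero_add] at hc
  calc u * Real.log 2 ≤ Real.log (1 - u + u * 2) := hc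
    _ = Real.log (1 + u) := by ring_nf

lemma qsplit {n : ℝ} (hn : 1 < n) :
    (n / (n-1)) ^ n = (n / (n-1)) ^ (n-1) * (n / (n-1)) := by
  have h1 : (0:ℝ) < n - 1 := by linarith
  have hq : (0:ℝ) < n / (n-1) := by positivity
  have h := Real.rpow_add hq (n-1) 1
  rw [Real.rpow_one, show n - 1 + 1 = n by ring] at h
  exact h


lemma qpow_two_le {n : ℝ} (hn : 2 ≤ n) : 2 ≤ (n / (n-1)) ^ (n-1) := by
  have h1 : (0:ℝ) < n - 1 := by linarith
  have hq : (0:ℝ) < n / (n-1) := by positivity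
  have hqe : n / (n-1) = 1 + 1/(n-1) := by field_simp; ring
  have hu0 : (0:ℝ) ≤ 1/(n-1) := by positivity
  have hu1 : 1/(n-1) ≤ 1 := by rw [div_le_one h1]; linarith
  have hlog : Real.log 2 ≤ (n-1) * Real.log (n / (n-1)) := by
    have hch := log_chord hu0 hu1
    rw [← hqe] at hch
    have hmul : (n-1) * (1/(n-1)) = 1 := by field_simp
    calc Real.log 2 = ((n-1) * (1/(n-1))) * Real.log 2 := by rw [hmul, one_mul]
      _ = (n-1) * (1/(n-1) * Real.log 2) := by ring
      _ ≤ (n-1) * Real.log (n/(n-1)) := mul_le_mul_of_nonneg_left hch h1.le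
  have := Real.rpow_def_of_pos hq (n-1)
  rw [this, mul_comm]
  calc (2:ℝ) = Real.exp (Real.log 2) := (Real.exp_log two_pos).symm
    _ ≤ Real.exp ((n-1) * Real.log (n/(n-1))) := Real.exp_le_exp.2 hlog

lemma B_pos {n : ℝ} (hn : 2 ≤ n) : 0 < Bfun n := by
  have h1 : (0:ℝ) < n - 1 := by linarith
  have hq : (1:ℝ) < n / (n-1) := by rw [lt_div_iff₀ h1]; linarith
  have h2 := qpow_two_le hn
  have h3 : 1/(n-1) ≤ 1 := by rw [div_le_one h1]; linarith
  have h4 := qsplit (by linarith : (1:ℝ) < n)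
  unfold Bfun
  nlinarith

lemma alpha_eq {n : ℝ} (hn : 2 ≤ n) : alphaFun n = (Bfun n)⁻¹ := by
  have h1 : (0:ℝ) < n - 1 := by linarith
  have hn0 : (0:ℝ) < n := by linarith
  have hq : (0:ℝ) < n / (n-1) := by positivity
  have h2 : (1:ℝ) - 1/n = (n/(n-1))⁻¹ := by field_simp
  have h3 : ((1:ℝ) - 1/n) ^ (n-1) = ((n/(n-1)) ^ (n-1))⁻¹ := by
    rw [h2, ← Real.inv_rpow hq.le]
  have h4 : n / (1 - 1/n) ^ (n-1) - 1 = (n-1) * Bfun n := by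
    rw [h3, div_eq_mul_inv, inv_inv]
    unfold Bfun
    rw [qsplit (by linarith : (1:ℝ) < n)]
    field_simp
  unfold alphaFun
  rw [h4, div_mul_eq_div_div, div_self (by linarith : n - 1 ≠ 0), one_div]

lemma hasDerivB {n : ℝ} (hn : 1 < n) :
    HasDerivAt Bfun
      ((1/(n-1))^2 - (n/(n-1)) ^ n * (1/(n-1) - Real.log (n/(n-1)))) n := by
  have h1 : (0:ℝ) < n - 1 := by linarith
  have h1' : n - 1 ≠ 0 := h1.ne'
  have hq : (0:ℝ) < n / (n-1) := by positivity
  have hf : HasDerivAt (fun x : ℝ => x / (x-1)) (-(1/(n-1)^2)) n := by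
    have h := (hasDerivAt_id n).fun_div ((hasDerivAt_id n).sub_const 1) h1'
    refine h.congr_deriv (Eq.symm ?_)
    simp only [id]
    field_simp
    ring
  have hpow := hf.rpow (hasDerivAt_id n) (by simpa using hq)
  have hinv : HasDerivAt (fun x : ℝ => 1 / (x-1)) (-(1/(n-1)^2)) n := by
    have h := ((hasDerivAt_id n).sub_const 1).fun_inv h1'
    simpa [one_div, neg_div] using h
  have h := hpow.fun_sub hinv
  have hs := qsplit hn
  refine h.congr_deriv (Eq.symm ?_)
  simp only [id_eq, one_mul]
  rw [hs]
  field_simp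
  ring

lemma derivB_neg {n : ℝ} (hn : 2 ≤ n) :
    (1/(n-1))^2 - (n/(n-1)) ^ n * (1/(n-1) - Real.log (n/(n-1))) < 0 := by
  have h1 : (0:ℝ) < n - 1 := by linarith
  have hn0 : (0:ℝ) < n := by linarith
  have hq0 : (0:ℝ) < n / (n-1) := by positivity
  have hq1 : (1:ℝ) < n / (n-1) := by rw [lt_div_iff₀ h1]; linarith
  have hlog := log_lt_half hq1
  have e1 : 1/(n-1) - (n/(n-1) - (n/(n-1))⁻¹)/2 = (1/(n-1))^2 / (2 * (n/(n-1))) := by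
    field_simp
    ring
  have step1 : (1/(n-1))^2 / (2 * (n/(n-1))) < 1/(n-1) - Real.log (n/(n-1)) := by
    rw [← e1]; linarith
  have hqn : (0:ℝ) < (n/(n-1)) ^ n := Real.rpow_pos_of_pos hq0 n
  have step2 := mul_lt_mul_of_pos_left step1 hqn
  have e2 : (n/(n-1)) ^ n * ((1/(n-1))^2 / (2 * (n/(n-1)))) =
      (n/(n-1)) ^ (n-1) * (1/(n-1))^2 / 2 := by
    rw [qsplit (by linarith : (1:ℝ) < n)]
    field_simp
  have h2 := qpow_two_le hn
  have hu2 : (0:ℝ) < (1/(n-1))^2 := by positivity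
  nlinarith

lemma B_anti : StrictAntiOn Bfun (Set.Ici (2:ℝ)) := by
  apply strictAntiOn_of_deriv_neg (convex_Ici 2)
  · intro x hx
    exact (hasDerivB (by simpa using lt_of_lt_of_le one_lt_two hx)).continuousAt.continuousWithinAt
  · intro x hx
    rw [interior_Ici, Set.mem_Ioi] at hx
    rw [(hasDerivB (by linarith : (1:ℝ) < x)).deriv]
    exact derivB_neg hx.le

lemma B_tendsto : Tendsto Bfun atTop (nhds (Real.exp 1)) := by
  have h1 : Tendsto (fun x : ℝ => (1 + 1/x) ^ x) atTop (nhds (Real.exp 1)) := by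
    simpa using tendsto_one_add_div_rpow_exp 1
  have h2 : Tendsto (fun n : ℝ => n - 1) atTop atTop :=
    tendsto_atTop_add_const_right _ (-1) tendsto_id
  have h3 : Tendsto (fun n : ℝ => (1 + 1/(n-1)) ^ (n-1)) atTop (nhds (Real.exp 1)) := h1.comp h2
  have h4 : Tendsto (fun n : ℝ => 1/(n-1)) atTop (nhds 0) := by
    simpa [one_div, Function.comp_def] using (tendsto_inv_atTop_zero.comp h2)
  have h5 : Tendsto (fun n : ℝ => 1 + 1/(n-1)) atTop (nhds 1) := by
    simpa using h4.const_add 1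
  have h6 := (h3.mul h5).sub h4
  rw [show Real.exp 1 * 1 - 0 = Real.exp 1 by ring] at h6
  apply h6.congr'
  filter_upwards [eventually_gt_atTop (1:ℝ)] with n hn
  have h1' : (0:ℝ) < n - 1 := by linarith
  have hqe : 1 + 1/(n-1) = n/(n-1) := by field_simp; ring
  rw [hqe]
  unfold Bfun
  rw [qsplit hn]

theorem alpha_strictMono_and_limits :
    StrictMonoOn alphaFun (Set.Ici (2 : ℝ)) ∧
      alphaFun 2 = 1 / 3 ∧
      Filter.Tendsto alphaFun Filter.atTop (nhds (1 / Real.exp 1)) := by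
  refine ⟨?_, ?_, ?_⟩
  · intro a ha b hb hab
    rw [Set.mem_Ici] at ha hb
    rw [alpha_eq ha, alpha_eq hb]
    exact inv_strictAnti₀ (B_pos hb) (B_anti ha hb hab)
  · unfold alphaFun
    norm_num
  · have h := B_tendsto.inv₀ (Real.exp_ne_zero 1)
    rw [← one_div] at h
    apply h.congr'
    filter_upwards [eventually_ge_atTop (2:ℝ)] with n hn
    rw [alpha_eq hn]
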